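/- A reducible leaf of a facet complex Δ cannot belong to any cycle contained in Δ. -/
import Mathlib


variable {V : Type*} [DecidableEq V]

/-- A facet complex: no facet contains another. -/
def IsFacetComplex (Δ : Finset (Finset V)) : Prop :=
  ∀ F ∈ Δ, ∀ G ∈ Δ, F ⊆ G → F = G

/-- `F` is a leaf of `Δ`. -/
def IsLeaf (Δ : Finset (Finset V)) (F : Finset V) : Prop :=
  F ∈ Δ ∧ (Δ = {F} ∨ ∃ G ∈ Δ.erase F, ∀ H ∈ Δ.erase F, H ∩ F ⊆ G ∩ F)

/-- `Δ` is a forest: every nonempty subset has a leaf. -/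
def IsForest (Δ : Finset (Finset V)) : Prop :=
  ∀ Γ ⊆ Δ, Γ.Nonempty → ∃ F, IsLeaf Γ F

/-- `Δ` is connected: any two facets are joined by a path of consecutively
intersecting facets. -/
def FCConnected (Δ : Finset (Finset V)) : Prop :=
  ∀ F ∈ Δ, ∀ G ∈ Δ,
    Relation.ReflTransGen (fun A B => A ∈ Δ ∧ B ∈ Δ ∧ (A ∩ B).Nonempty) F G

/-- A (simplicial) tree is a connected forest. -/
def IsTree (Δ : Finset (Finset V)) : Prop := FCConnected Δ ∧ IsForest Δ

/-- A cycle: a nonempty facet complex with no leaf, every nonempty proper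
subset of which has a leaf. -/
def IsCycle (Δ : Finset (Finset V)) : Prop :=
  Δ.Nonempty ∧ (¬ ∃ F, IsLeaf Δ F) ∧ ∀ Γ ⊂ Δ, Γ.Nonempty → ∃ F, IsLeaf Γ F

/-- Strong neighbors in `Δ`. -/
def StrongNeighbor (Δ : Finset (Finset V)) (F G : Finset V) : Prop :=
  F ∈ Δ ∧ G ∈ Δ ∧ F ≠ G ∧ ∀ H ∈ Δ, F ∩ G ⊆ H → H = F ∨ H = G

/-- `F` is a reducible leaf of `Δ`. -/
def ReducibleLeaf (Δ : Finset (Finset V)) (F : Finset V) : Prop :=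
  F ∈ Δ ∧ ∀ G ∈ Δ, ∀ G' ∈ Δ, G ∩ F ⊆ G' ∩ F ∨ G' ∩ F ⊆ G ∩ F


lemma exists_max_rel {α : Type*} [DecidableEq α] (r : α → α → Prop)
    (htrans : ∀ a b c, r a b → r b c → r a c) :
    ∀ (S : Finset α), S.Nonempty → (∀ a ∈ S, ∀ b ∈ S, r a b ∨ r b a) →
      ∃ a ∈ S, ∀ b ∈ S, r b a := by
  intro S
  induction S using Finset.induction_on with
  | empty => simp
  | @insert x s hx ih =>
    intro _ htot
    rcases s.eq_empty_or_nonempty with rfl | hs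
    · exact ⟨x, Finset.mem_insert_self _ _, by
        intro b hb
        simp only [Finset.mem_insert, Finset.notMem_empty, or_false] at hb
        subst hb
        rcases htot b (Finset.mem_insert_self _ _) b (Finset.mem_insert_self _ _) with h | h <;> exact h⟩
    · obtain ⟨a, ha, hmax⟩ := ih hs (fun p hp q hq =>
        htot p (Finset.mem_insert_of_mem hp) q (Finset.mem_insert_of_mem hq))
      rcases htot a (Finset.mem_insert_of_mem ha) x (Finset.mem_insert_self _ _) with h | h
      · refine ⟨x, Finset.mem_insert_self _ _, ?_⟩
        intro b hb
        rcases Finset.mem_insert.mp hb with rfl | hb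
        · rcases htot b (Finset.mem_insert_self _ _) b (Finset.mem_insert_self _ _) with h' | h' <;> exact h'
        · exact htrans b a x (hmax b hb) h
      · refine ⟨a, Finset.mem_insert_of_mem ha, ?_⟩
        intro b hb
        rcases Finset.mem_insert.mp hb with rfl | hb
        · exact h
        · exact hmax b hb

theorem reducible_leaf_not_in_cycle (Δ : Finset (Finset V))
    (hΔ : IsFacetComplex Δ) (F : Finset V) (hred : ReducibleLeaf Δ F) :
    ∀ Γ ⊆ Δ, IsCycle Γ → F ∉ Γ := by
  intro Γ hΓΔ hcyc hF
  apply hcyc.2.1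
  refine ⟨F, hF, ?_⟩
  rcases (Γ.erase F).eq_empty_or_nonempty with he | hne
  · left
    rcases (Finset.erase_eq_empty_iff Γ F).mp he with rfl | h
    · exact absurd hF (Finset.notMem_empty F)
    · exact h
  · right
    obtain ⟨G, hG, hmax⟩ := exists_max_rel (fun A B : Finset V => A ∩ F ⊆ B ∩ F)
      (fun a b c hab hbc => hab.trans hbc) (Γ.erase F) hne
      (fun a ha b hb => hred.2 a (hΓΔ (Finset.mem_of_mem_erase ha)) b
        (hΓΔ (Finset.mem_of_mem_erase hb)))
    exact ⟨G, hG, hmax⟩
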